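/- Let A be a C*-algebra, let a be a positive element of A, let q be a projection in A, and let δ > 0. If q is Cuntz subequivalent to (a - δ)₊, then there exists a projection p in A with p Murray–von Neumann equivalent to q and a ≥ δ·p. -/

import Mathlib

open Filter Topology

lemma commute_cfc_aux {A : Type*} [CStarAlgebra A] {m q : A} (hm : IsSelfAdjoint m)
    (hq : Commute q m) (f : ℝ → ℝ) : Commute q (cfc f m) := by
  by_cases hf : ContinuousOn f (spectrum ℝ m)
  · rw [cfc_apply f m hm hf]
    generalize (⟨_, hf.restrict⟩ : C(spectrum ℝ m, ℝ)) = g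
    induction g using ContinuousMap.induction_on_of_compact with
    | const r =>
        have : (ContinuousMap.const (spectrum ℝ m) r) = algebraMap ℝ C(spectrum ℝ m, ℝ) r := rfl
        rw [this, AlgHomClass.commutes]
        exact Algebra.commute_algebraMap_right r q
    | id => rwa [cfcHom_id hm]
    | star_id => rw [map_star, cfcHom_id hm, hm.star_eq]; exact hq
    | add f₁ f₂ h₁ h₂ => rw [map_add]; exact h₁.add_right h₂
    | mul f₁ f₂ h₁ h₂ => rw [map_mul]; exact h₁.mul_right h₂
    | frequently g hg =>
        have hcl : IsClosed {g : C(spectrum ℝ m, ℝ) | Commute q (cfcHom hm g)} := by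
          simp only [commute_iff_eq]
          exact isClosed_eq (continuous_const.mul (cfcHom_continuous hm))
            ((cfcHom_continuous hm).mul continuous_const)
        exact hcl.closure_subset (mem_closure_iff_frequently.2 hg)
  · rw [cfc_apply_of_not_continuousOn m hf]
    exact Commute.zero_right q

def CuntzBelow {A : Type*} [CStarAlgebra A] (a b : A) : Prop :=
  ∃ x : ℕ → A, Tendsto (fun n => ‖a - x n * b * star (x n)‖) atTop (𝓝 0)

noncomputable def cutoff {A : Type*} [CStarAlgebra A] (a : A) (δ : ℝ) : A :=
  cfc (fun t : ℝ => max (t - δ) 0) a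

theorem stmt_2 {A : Type*} [CStarAlgebra A] [PartialOrder A] [StarOrderedRing A] (a q : A) (ha : 0 ≤ a)
    (hq₁ : star q = q) (hq₂ : q * q = q) (δ : ℝ) (hδ : 0 < δ)
    (h : CuntzBelow q (cutoff a δ)) :
    ∃ p : A, star p = p ∧ p * p = p ∧
      (∃ v : A, v * star v = p ∧ star v * v = q) ∧ δ • p ≤ a := by
  obtain ⟨x, hx⟩ := h
  rcases subsingleton_or_nontrivial A with hA | hA
  · exact ⟨0, Subsingleton.elim _ _, Subsingleton.elim _ _,
      ⟨0, Subsingleton.elim _ _, Subsingleton.elim _ _⟩,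
      le_of_eq (Subsingleton.elim _ _)⟩
  have haSA : IsSelfAdjoint a := ha.isSelfAdjoint
  -- the square root of the cutoff
  set fh : ℝ → ℝ := fun t => Real.sqrt (max (t - δ) 0) with hfh
  have hfh_cont : Continuous fh := Real.continuous_sqrt.comp (by fun_prop)
  set bh : A := cfc fh a with hbh
  have hbh_sa : IsSelfAdjoint bh := cfc_predicate fh a
  have hb_eq : cutoff a δ = bh * bh := by
    rw [hbh, ← cfc_mul fh fh a hfh_cont.continuousOn hfh_cont.continuousOn, cutoff]
    exact cfc_congr fun t _ => (Real.mul_self_sqrt (le_max_right _ _)).symm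
  -- pick a good element
  obtain ⟨n, hn⟩ := (hx.eventually (gt_mem_nhds (by norm_num : (0:ℝ) < 1/3))).exists
  set X := x n with hX
  -- basic norm facts about q
  have hqn : ‖q‖ ≤ 1 := by
    have h1 : ‖star q * q‖ = ‖q‖ * ‖q‖ := CStarRing.norm_star_mul_self
    rw [hq₁, hq₂] at h1
    nlinarith [norm_nonneg q]
  set z : A := q * X * bh with hz
  have hstar_z : star z = bh * star X * q := by
    simp [hz, star_mul, hq₁, hbh_sa.star_eq, mul_assoc]
  set m : A := z * star z with hm
  have hm_eq : m = q * (X * cutoff a δ * star X) * q := by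
    rw [hm, hstar_z, hz, hb_eq]
    noncomm_ring
  have hqm : q * m = m := by rw [hm_eq, ← mul_assoc, ← mul_assoc, hq₂, mul_assoc]
  have hmq : m * q = m := by rw [hm_eq]; rw [mul_assoc, mul_assoc, hq₂, ← mul_assoc]
  have hm_sa : IsSelfAdjoint m := by
    simp only [hm]; exact IsSelfAdjoint.mul_star_self z
  have hq_norm_sub : ‖q - m‖ < 1/2 := by
    have key : q - m = q * (q - X * cutoff a δ * star X) * q := by
      rw [mul_sub, sub_mul, hq₂, hq₂, hm_eq]
    have hb1 : ‖q * (q - X * cutoff a δ * star X) * q‖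
        ≤ ‖q‖ * ‖q - X * cutoff a δ * star X‖ * ‖q‖ := by
      calc ‖q * (q - X * cutoff a δ * star X) * q‖
          ≤ ‖q * (q - X * cutoff a δ * star X)‖ * ‖q‖ := norm_mul_le _ _
        _ ≤ ‖q‖ * ‖q - X * cutoff a δ * star X‖ * ‖q‖ :=
            mul_le_mul_of_nonneg_right (norm_mul_le _ _) (norm_nonneg q)
    rw [key]
    calc ‖q * (q - X * cutoff a δ * star X) * q‖
        ≤ ‖q‖ * ‖q - X * cutoff a δ * star X‖ * ‖q‖ := hb1
      _ ≤ 1 * ‖q - X * cutoff a δ * star X‖ * 1 := by gcongr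
      _ = ‖q - X * cutoff a δ * star X‖ := by ring
      _ < 1/2 := by linarith
  -- the auxiliary invertible-ish element
  set m' : A := 1 - q + m with hm'
  have hm'_sa : IsSelfAdjoint m' := by
    rw [IsSelfAdjoint, hm', star_add, star_sub, star_one, hq₁, hm_sa.star_eq]
  have hqm' : q * m' = m := by
    rw [hm', mul_add, mul_sub, mul_one, hq₂, sub_self, zero_add, hqm]
  have hm'q : m' * q = m := by
    rw [hm', add_mul, sub_mul, one_mul, hq₂, sub_self, zero_add, hmq]
  have hq_comm : Commute q m' := by rw [commute_iff_eq, hqm', hm'q]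
  -- spectrum of m' is contained in (1/2, ∞)
  have hspec : ∀ t ∈ spectrum ℝ m', 1/2 < t := by
    intro t ht
    have h1 : (1 : ℝ) - t ∈ spectrum ℝ (algebraMap ℝ A 1 - m') := by
      rw [← spectrum.singleton_sub_eq]
      exact Set.sub_mem_sub rfl ht
    rw [map_one] at h1
    have h2 : ‖(1 : ℝ) - t‖ ≤ ‖(1 : A) - m'‖ := spectrum.norm_le_norm_of_mem h1
    have h3 : (1 : A) - m' = q - m := by rw [hm']; abel
    rw [h3] at h2
    have h4 : |1 - t| < 1/2 := lt_of_le_of_lt h2 hq_norm_sub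
    rw [abs_lt] at h4
    linarith [h4.1, h4.2]
  -- inverse square root of m'
  set g : ℝ → ℝ := fun t => (Real.sqrt t)⁻¹ with hg
  have hg_cont : ContinuousOn g (spectrum ℝ m') := by
    apply ContinuousOn.inv₀ (Real.continuous_sqrt.continuousOn)
    intro t ht
    exact ne_of_gt (Real.sqrt_pos.2 (by linarith [hspec t ht]))
  set s : A := cfc g m' with hs
  have hs_sa : IsSelfAdjoint s := cfc_predicate g m'
  have hs_comm : Commute q s := commute_cfc_aux hm'_sa hq_comm g
  have key : s * m' * s = 1 := by
    have h1 : cfc g m' * cfc (id : ℝ → ℝ) m' * cfc g m' = 1 := by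
      rw [← cfc_mul g id m' hg_cont (continuousOn_id),
          ← cfc_mul (fun x => g x * id x) g m' (hg_cont.mul continuousOn_id) hg_cont]
      rw [← cfc_one (R := ℝ) m' hm'_sa]
      apply cfc_congr
      intro t ht
      have h1 : 1/2 < t := hspec t ht
      have h2 : Real.sqrt t ≠ 0 := ne_of_gt (Real.sqrt_pos.2 (by linarith))
      show g t * id t * g t = 1
      simp only [hg, id]
      rw [mul_comm, ← mul_assoc, ← mul_inv, Real.mul_self_sqrt (by linarith), inv_mul_cancel₀ (ne_of_gt (by linarith))]
    rw [cfc_id ℝ m' hm'_sa] at h1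
    exact h1
  -- the partial isometry
  set v : A := s * z with hv
  have hqz : q * z = z := by rw [hz, ← mul_assoc, ← mul_assoc, hq₂]
  have hvv : v * star v = q := by
    have h1 : v * star v = s * m * s := by
      rw [hv, star_mul, hs_sa.star_eq, hm]
      noncomm_ring
    rw [h1, ← hm'q]
    calc s * (m' * q) * s = s * m' * (q * s) := by noncomm_ring
      _ = s * m' * (s * q) := by rw [hs_comm.eq]
      _ = s * m' * s * q := by noncomm_ring
      _ = q := by rw [key, one_mul]
  have hqv : q * v = v := by
    rw [hv, ← mul_assoc, hs_comm.eq, mul_assoc, hqz]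
  set p : A := star v * v with hp
  have hp_sa : star p = p := by simp [hp, star_mul]
  have hp_idem : p * p = p := by
    calc p * p = star v * (v * star v) * v := by rw [hp]; noncomm_ring
      _ = star v * (q * v) := by rw [hvv]; noncomm_ring
      _ = p := by rw [hqv, hp]
  refine ⟨p, hp_sa, hp_idem, ⟨star v, by rw [star_star, hp], by rw [star_star, hvv]⟩, ?_⟩
  -- now the order estimate
  set e : A := cfc (fun t : ℝ => min (max t 0) δ) a with he
  have he_cont : Continuous (fun t : ℝ => min (max t 0) δ) := by fun_prop
  have he_sa : IsSelfAdjoint e := cfc_predicate _ a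
  have he_nonneg : (0 : A) ≤ e := cfc_nonneg fun t _ => le_min (le_max_right t 0) hδ.le
  have he_le : e ≤ a := by
    conv_rhs => rw [← cfc_id ℝ a haSA]
    refine cfc_mono (fun t ht => ?_) he_cont.continuousOn continuousOn_id
    have h0 : 0 ≤ t := spectrum_nonneg_of_nonneg ha ht
    simp only [id_eq, max_eq_left h0]
    exact min_le_left t δ
  have hbh_e : bh * e = δ • bh := by
    rw [hbh, he, ← cfc_mul fh _ a hfh_cont.continuousOn he_cont.continuousOn,
      ← cfc_const_mul δ fh a hfh_cont.continuousOn]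
    apply cfc_congr
    intro t _
    show fh t * (max t 0 ⊓ δ) = δ * fh t
    by_cases hts : t ≤ δ
    · have : fh t = 0 := by simp [hfh, Real.sqrt_eq_zero', max_eq_right, sub_nonpos.2 hts]
      simp [this]
    · push_neg at hts
      have h1 : max t 0 ⊓ δ = δ := by
        rw [max_eq_left (by linarith : (0:ℝ) ≤ t)]
        exact min_eq_right hts.le
      rw [h1, mul_comm]
  have he_bh : e * bh = δ • bh := by
    have := congrArg star hbh_e
    simpa [star_mul, hbh_sa.star_eq, he_sa.star_eq, star_smul] using this
  have hze : z * e = δ • z := by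
    rw [hz, mul_assoc, mul_assoc, hbh_e, mul_smul_comm, mul_smul_comm, mul_assoc]
  have hez : e * star z = δ • star z := by
    rw [hstar_z, ← mul_assoc, ← mul_assoc, he_bh, smul_mul_assoc, smul_mul_assoc]
  have hpe : p * e = δ • p := by
    rw [hp, hv, star_mul, hs_sa.star_eq]
    calc star z * s * (s * z) * e = star z * s * s * (z * e) := by noncomm_ring
      _ = star z * s * s * (δ • z) := by rw [hze]
      _ = δ • (star z * s * (s * z)) := by rw [mul_smul_comm]; noncomm_ring
  have hep : e * p = δ • p := by
    rw [hp, hv, star_mul, hs_sa.star_eq]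
    calc e * (star z * s * (s * z)) = (e * star z) * (s * (s * z)) := by noncomm_ring
      _ = (δ • star z) * (s * (s * z)) := by rw [hez]
      _ = δ • (star z * s * (s * z)) := by rw [smul_mul_assoc]; noncomm_ring
  have hkey : (1 - p) * e * (1 - p) = e - δ • p := by
    calc (1 - p) * e * (1 - p) = e - p * e - (e * p - p * e * p) := by noncomm_ring
      _ = e - δ • p - (δ • p - δ • p) := by
          rw [hpe, hep, smul_mul_assoc, hp_idem]
      _ = e - δ • p := by abel
  have hconj : (0 : A) ≤ (1 - p) * e * (1 - p) := by
    have h1 : star (1 - p) = 1 - p := by rw [star_sub, star_one, hp_sa]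
    calc (0 : A) ≤ star (1 - p) * e * (1 - p) := star_left_conjugate_nonneg he_nonneg _
      _ = (1 - p) * e * (1 - p) := by rw [h1]
  have : δ • p ≤ e := by
    rw [← sub_nonneg, ← hkey]; exact hconj
  exact this.trans he_le
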